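/- Let P be a convex polygon in the affine plane with line at infinity L, and O a point in the interior of P. For any k > 0 for which S^k(P) is a genuine polygon, S^k(P) is convex if and only if the dual polygon D^k(P*) contains the point L (in the dual plane) in its interior. -/

import Mathlib

/-!
STATEMENT 8. Let `P` be a convex polygon in the affine plane (line at
infinity `L`), with `O` a point in its interior.  For any `k > 0` for which
`S^k(P)` is a genuine polygon, `S^k(P)` is convex if and only if the polygon
`D^k(P*)` contains the point of the dual plane corresponding to `L` in its
interior.

Setup in homogeneous coordinates: `v i = (x i, y i, 1)` are the lifts of the
vertices of `P`; the pentagram map `D` and its inverse `S` act on lifted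
polygons by cross-product formulas; `P*` has vertex covectors
`w i = v i × v (i+1)`.  The affine chart of the dual plane determined by `O`
normalizes a covector `ℓ` by `ℓ(O,1) = 1`, sending `ℓ` to
`(ℓ 0, ℓ 1)/(ℓ 0 · O.1 + ℓ 1 · O.2 + ℓ 2)`; in this chart the point `L`
corresponds to the origin `(0,0)`.
-/

/-- Planar cross product. -/
def cross2 (a b : ℝ × ℝ) : ℝ := a.1 * b.2 - a.2 * b.1

/-- `p` is a strictly convex polygon with vertices labeled counterclockwise. -/
def ConvexCCW {n : ℕ} [NeZero n] (p : Fin n → ℝ × ℝ) : Prop :=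
  ∀ i j : Fin n, j ≠ i → j ≠ i + 1 → 0 < cross2 (p (i + 1) - p i) (p j - p i)

/-- `p` is a strictly convex polygon (with either orientation). -/
def IsConvexPolygon {n : ℕ} [NeZero n] (p : Fin n → ℝ × ℝ) : Prop :=
  ConvexCCW p ∨ ConvexCCW (fun i => ((p i).1, -(p i).2))

/-- Cross product in `ℝ³`. -/
def cross3 (a b : Fin 3 → ℝ) : Fin 3 → ℝ :=
  ![a 1 * b 2 - a 2 * b 1, a 2 * b 0 - a 0 * b 2, a 0 * b 1 - a 1 * b 0]

/-- The pentagram map on lifted polygons: vertex `i` of `D(u)` is the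
intersection of the short diagonals `(u_{i-1} u_{i+1})` and `(u_i u_{i+2})`. -/
def pentagramD {n : ℕ} [NeZero n] (u : Fin n → Fin 3 → ℝ) : Fin n → Fin 3 → ℝ :=
  fun i => cross3 (cross3 (u (i - 1)) (u (i + 1))) (cross3 (u i) (u (i + 2)))

/-- The inverse pentagram map on lifted polygons: vertex `i` of `S(u)` is the
intersection of the second-nearest sides `(u_{i-1} u_i)` and `(u_{i+1} u_{i+2})`. -/
def pentagramS {n : ℕ} [NeZero n] (u : Fin n → Fin 3 → ℝ) : Fin n → Fin 3 → ℝ :=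
  fun i => cross3 (cross3 (u (i - 1)) (u i)) (cross3 (u (i + 1)) (u (i + 2)))

/-- Dehomogenization in the standard affine chart `z = 1`. -/
noncomputable def dehom (u : Fin 3 → ℝ) : ℝ × ℝ := (u 0 / u 2, u 1 / u 2)

/-- Pairing of a line covector with the lift `(O, 1)` of the point `O`. -/
def pairO (O : ℝ × ℝ) (l : Fin 3 → ℝ) : ℝ := l 0 * O.1 + l 1 * O.2 + l 2

/-- Dehomogenization of the dual plane in the affine chart determined by `O`;
the line at infinity corresponds to the origin `(0, 0)` of this chart. -/
noncomputable def dehomDual (O : ℝ × ℝ) (l : Fin 3 → ℝ) : ℝ × ℝ :=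
  (l 0 / pairO O l, l 1 / pairO O l)

namespace PP

open scoped Fin.CommRing

/-- signed area functional of ordered triple -/
def det2 (a b c : ℝ × ℝ) : ℝ := cross2 (b - a) (c - a)

lemma det2_def (a b c : ℝ × ℝ) :
    det2 a b c = (b.1 - a.1) * (c.2 - a.2) - (b.2 - a.2) * (c.1 - a.1) := by
  simp [det2, cross2]

lemma det2_cyc (a b c : ℝ × ℝ) : det2 a b c = det2 b c a := by
  simp only [det2_def]; ring

lemma det2_swap (a b c : ℝ × ℝ) : det2 a b c = - det2 a c b := by
  simp only [det2_def]; ring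

section CH

variable {n : ℕ} [NeZero n] (q : Fin n → ℝ × ℝ)

/-- the `i`-th side functional -/
def sid (i : Fin n) (z : ℝ × ℝ) : ℝ := cross2 (q (i + 1) - q i) (z - q i)

lemma sid_eq_det2 (i : Fin n) (z : ℝ × ℝ) : sid q i z = det2 (q i) (q (i+1)) z := by
  simp only [sid, det2_def, cross2, Prod.fst_sub, Prod.snd_sub]

lemma convexCCW_iff : ConvexCCW q ↔ ∀ i j : Fin n, j ≠ i → j ≠ i + 1 → 0 < sid q i (q j) :=
  Iff.rfl

lemma sid_self (i : Fin n) : sid q i (q i) = 0 := by simp [sid, cross2]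
lemma sid_succ (i : Fin n) : sid q i (q (i+1)) = 0 := by
  simp only [sid, cross2, Prod.fst_sub, Prod.snd_sub]; ring

end CH

section CHproof

variable {n : ℕ} [NeZero n] {q : Fin n → ℝ × ℝ}

lemma natCast_ne_zero {c : ℕ} (h0 : 0 < c) (hcn : c < n) : (c : Fin n) ≠ 0 := by
  rw [Ne, Fin.natCast_eq_zero]
  intro hdvd
  have := Nat.le_of_dvd h0 hdvd
  omega

lemma shifts_ne (i : Fin n) {a b : ℕ} (ha : a < n) (hb : b < n) (hab : a ≠ b) :
    i + (a : Fin n) ≠ i + (b : Fin n) := by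
  intro h
  have h2 : (a : Fin n) = (b : Fin n) := by
    have := congrArg (fun z => z - i) h
    simpa [add_comm, add_sub_cancel_right] using this
  rw [Fin.ext_iff, Fin.val_natCast, Fin.val_natCast] at h2
  rw [Nat.mod_eq_of_lt ha, Nat.mod_eq_of_lt hb] at h2
  exact hab h2

lemma add_nat_ne (i : Fin n) {c : ℕ} (h0 : 0 < c) (hcn : c < n) : i + (c : Fin n) ≠ i := by
  have := shifts_ne i hcn (show 0 < n by omega) (by omega)
  simpa using this

/-- The chord lemma: the chord `q (v-1) → q (v+1)` sees every other vertex strictly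
on the left. -/
lemma CH (hn : 5 ≤ n) (hq : ConvexCCW q) (v j : Fin n)
    (h1 : j ≠ v - 1) (h2 : j ≠ v) (h3 : j ≠ v + 1) :
    0 < det2 (q (v-1)) (q (v+1)) (q j) := by
  have hq' := (convexCCW_iff q).1 hq
  have hvm1 : (v - 1) + 1 = v := by ring
  -- X = cross2 e0 e1 > 0
  have hvp1 : v + 1 ≠ v - 1 := by
    have : v + 1 = (v - 1) + (2:ℕ) := by push_cast; ring
    rw [this]
    have := shifts_ne (v-1) (show 2 < n by omega) (show 0 < n by omega) (by omega)
    simpa using this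
  have hXpos : 0 < cross2 (q v - q (v-1)) (q (v+1) - q v) := by
    have hvp2 : v + 1 ≠ (v - 1) + 1 := by
      rw [hvm1]
      have := add_nat_ne v (c := 1) one_pos (by omega)
      simpa using this
    have h := hq' (v-1) (v+1) hvp1 hvp2
    rw [sid, hvm1] at h
    have : cross2 (q v - q (v-1)) (q (v+1) - q (v-1))
        = cross2 (q v - q (v-1)) (q (v+1) - q v) := by
      simp only [cross2, Prod.fst_sub, Prod.snd_sub]; ring
    linarith [this ▸ h]
  set E0x := (q v).1 - (q (v-1)).1 with hE0x
  set E0y := (q v).2 - (q (v-1)).2 with hE0y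
  set E1x := (q (v+1)).1 - (q v).1 with hE1x
  set E1y := (q (v+1)).2 - (q v).2 with hE1y
  set X := cross2 (q v - q (v-1)) (q (v+1) - q v) with hX
  have hXexp : X = E0x * E1y - E0y * E1x := by
    rw [hX]; simp only [cross2, Prod.fst_sub, Prod.snd_sub, hE0x, hE0y, hE1x, hE1y]
  have hA : 0 < sid q (v-1) (q j) := hq' (v-1) j h1 (by rw [hvm1]; exact h2)
  have hB : 0 < sid q v (q j) := hq' v j h2 h3
  set A := sid q (v-1) (q j) with hAdef
  set B := sid q v (q j) with hBdef
  have hAexp : A = E0x * ((q j).2 - (q (v-1)).2) - E0y * ((q j).1 - (q (v-1)).1) := by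
    rw [hAdef, sid, hvm1]; simp only [cross2, Prod.fst_sub, Prod.snd_sub, hE0x, hE0y]
  have hBexp : B = E1x * ((q j).2 - (q v).2) - E1y * ((q j).1 - (q v).1) := by
    rw [hBdef, sid]; simp only [cross2, Prod.fst_sub, Prod.snd_sub, hE1x, hE1y]
  -- the target equals A + B - X
  have hdet : det2 (q (v-1)) (q (v+1)) (q j) = A + B - X := by
    rw [det2_def, hAexp, hBexp, hXexp]
    simp only [hE0x, hE0y, hE1x, hE1y]; ring
  -- suffices A + B > X
  rw [hdet]
  by_contra hcon
  push_neg at hcon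
  -- Cramer: X * (q j - q v) = A * e1 - B * e0  (coordinatewise)
  have c1 : X * ((q j).1 - (q v).1) = A * E1x - B * E0x := by
    rw [hAexp, hBexp, hXexp]; simp only [hE0x, hE0y, hE1x, hE1y]; ring
  have c2 : X * ((q j).2 - (q v).2) = A * E1y - B * E0y := by
    rw [hAexp, hBexp, hXexp]; simp only [hE0x, hE0y, hE1x, hE1y]; ring
  have comb1 : B * (q (v-1)).1 + (X - A - B) * (q v).1 + A * (q (v+1)).1 = X * (q j).1 := by
    simp only [hE0x, hE1x] at c1; linarith [c1]
  have comb2 : B * (q (v-1)).2 + (X - A - B) * (q v).2 + A * (q (v+1)).2 = X * (q j).2 := by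
    simp only [hE0y, hE1y] at c2; linarith [c2]
  -- evaluate side functional of edge j on the combination
  have key : B * sid q j (q (v-1)) + (X - A - B) * sid q j (q v) + A * sid q j (q (v+1)) = 0 := by
    simp only [sid, cross2, Prod.fst_sub, Prod.snd_sub]
    linear_combination ((q (j+1)).1 - (q j).1) * comb2 - ((q (j+1)).2 - (q j).2) * comb1
  have t2 : 0 < sid q j (q v) := by
    refine hq' j v (fun h => h2 h.symm) (fun h => h1 ?_)
    rw [h]; ring
  have t3 : 0 < sid q j (q (v+1)) := by
    refine hq' j (v+1) (fun h => h3 h.symm) (fun h => h2 ?_)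
    have := congrArg (fun z => z - 1) h
    simp only [add_sub_cancel_right] at this
    exact this.symm
  have t1 : 0 ≤ sid q j (q (v-1)) := by
    rcases eq_or_ne (v - 1) (j + 1) with h | h
    · rw [h, sid_succ]
    · exact le_of_lt (hq' j (v-1) (Ne.symm h1) h)
  have hXAB : 0 ≤ X - A - B := by linarith
  nlinarith [mul_nonneg (le_of_lt hB) t1, mul_nonneg hXAB t2.le, mul_pos hA t3, key]

end CHproof
section Hull

variable {n : ℕ} [NeZero n] {q : Fin n → ℝ × ℝ}

lemma cramer2 (e g z : ℝ × ℝ) :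
    (cross2 e g) • z = (cross2 z g) • e + (cross2 e z) • g := by
  have h1 : ((cross2 e g) • z).1 = ((cross2 z g) • e + (cross2 e z) • g).1 := by
    simp [cross2]; ring
  have h2 : ((cross2 e g) • z).2 = ((cross2 z g) • e + (cross2 e z) • g).2 := by
    simp [cross2]; ring
  exact Prod.ext h1 h2

/-- consecutive turn is positive -/
lemma turn_pos (hn : 5 ≤ n) (hq : ConvexCCW q) (v : Fin n) :
    0 < cross2 (q v - q (v-1)) (q (v+1) - q v) := by
  have hq' := (convexCCW_iff q).1 hq
  have hvm1 : (v - 1) + 1 = v := by ring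
  have hvp1 : v + 1 ≠ v - 1 := by
    have h' : v + 1 = (v - 1) + (2:ℕ) := by push_cast; ring
    rw [h']
    have := shifts_ne (v-1) (show 2 < n by omega) (show 0 < n by omega) (by omega)
    simpa using this
  have hvp2 : v + 1 ≠ (v - 1) + 1 := by
    rw [hvm1]
    have := add_nat_ne v (c := 1) one_pos (by omega)
    simpa using this
  have h := hq' (v-1) (v+1) hvp1 hvp2
  rw [sid, hvm1] at h
  have heq : cross2 (q v - q (v-1)) (q (v+1) - q (v-1))
      = cross2 (q v - q (v-1)) (q (v+1) - q v) := by
    simp only [cross2, Prod.fst_sub, Prod.snd_sub]; ring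
  linarith [heq ▸ h]

lemma sid_apply (i : Fin n) (z : ℝ × ℝ) :
    sid q i z = (q (i+1) - q i).1 * z.2 - (q (i+1) - q i).2 * z.1
      - ((q (i+1) - q i).1 * (q i).2 - (q (i+1) - q i).2 * (q i).1) := by
  simp only [sid, cross2, Prod.fst_sub, Prod.snd_sub]; ring

lemma sid_continuous (i : Fin n) : Continuous (sid q i) := by
  have h : sid q i = fun z => (q (i+1) - q i).1 * z.2 - (q (i+1) - q i).2 * z.1
      - ((q (i+1) - q i).1 * (q i).2 - (q (i+1) - q i).2 * (q i).1) := funext (sid_apply i)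
  rw [h]
  fun_prop

/-- affine in each argument, generic convexity of halfplanes -/
lemma convex_sid_ge (i : Fin n) : Convex ℝ {z : ℝ × ℝ | 0 ≤ sid q i z} := by
  have : {z : ℝ × ℝ | 0 ≤ sid q i z} =
      {z : ℝ × ℝ | ((q (i+1) - q i).1 * (q i).2 - (q (i+1) - q i).2 * (q i).1) ≤
        (q (i+1) - q i).1 * z.2 - (q (i+1) - q i).2 * z.1} := by
    ext z; rw [Set.mem_setOf_eq, Set.mem_setOf_eq, sid_apply]; constructor <;> intro h <;> linarith
  rw [this]
  exact convex_halfSpace_ge (IsLinearMap.mk (by intros; simp; ring) (by intros; simp; ring)) _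

lemma convex_sid_gt (i : Fin n) : Convex ℝ {z : ℝ × ℝ | 0 < sid q i z} := by
  have : {z : ℝ × ℝ | 0 < sid q i z} =
      {z : ℝ × ℝ | ((q (i+1) - q i).1 * (q i).2 - (q (i+1) - q i).2 * (q i).1) <
        (q (i+1) - q i).1 * z.2 - (q (i+1) - q i).2 * z.1} := by
    ext z; rw [Set.mem_setOf_eq, Set.mem_setOf_eq, sid_apply]; constructor <;> intro h <;> linarith
  rw [this]
  exact convex_halfSpace_gt (IsLinearMap.mk (by intros; simp; ring) (by intros; simp; ring)) _

lemma sid_vertex_nonneg (hq : ConvexCCW q) (i j : Fin n) : 0 ≤ sid q i (q j) := by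
  rcases eq_or_ne j i with rfl | h1
  · rw [sid_self]
  rcases eq_or_ne j (i+1) with rfl | h2
  · rw [sid_succ]
  exact le_of_lt (hq i j h1 h2)

lemma hull_subset_halfplane (hq : ConvexCCW q) (i : Fin n) :
    convexHull ℝ (Set.range q) ⊆ {z | 0 ≤ sid q i z} :=
  convexHull_min (by rintro _ ⟨j, rfl⟩; exact sid_vertex_nonneg hq i j) (convex_sid_ge i)

/-- strictly inside implies in the convex hull of the vertices -/
lemma inReg_subset_hull (hn : 5 ≤ n) (hq : ConvexCCW q) {y : ℝ × ℝ}
    (hy : ∀ i, 0 < sid q i y) : y ∈ convexHull ℝ (Set.range q) := by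
  by_contra hy'
  obtain ⟨f, u, hfu, huy⟩ := geometric_hahn_banach_closed_point
    (convex_convexHull ℝ _) ((Set.finite_range q).isClosed_convexHull (𝕜 := ℝ)) hy'
  obtain ⟨m, hm⟩ := Finite.exists_max (fun i => f (q i))
  set e : ℝ × ℝ := q (m+1) - q m with he
  set g : ℝ × ℝ := q (m-1) - q m with hg
  set A := sid q (m-1) y with hA
  set B := sid q m y with hB
  have hApos : 0 < A := hy (m-1)
  have hBpos : 0 < B := hy m
  have hX : cross2 e g = cross2 (q m - q (m-1)) (q (m+1) - q m) := by
    simp only [he, hg, cross2, Prod.fst_sub, Prod.snd_sub]; ring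
  have hXpos : 0 < cross2 e g := by rw [hX]; exact turn_pos hn hq m
  -- Cramer with z = y - q m
  have hz1 : cross2 (y - q m) g = A := by
    have hvm1 : (m - 1) + 1 = m := by ring
    rw [hA, sid, hvm1]
    simp only [hg, cross2, Prod.fst_sub, Prod.snd_sub]; ring
  have hz2 : cross2 e (y - q m) = B := by rw [hB, sid]
  have hcram := cramer2 e g (y - q m)
  rw [hz1, hz2] at hcram
  -- apply f
  have happ : cross2 e g * (f y - f (q m)) = A * (f (q (m+1)) - f (q m)) + B * (f (q (m-1)) - f (q m)) := by
    have := congrArg f hcram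
    simp only [map_smul, map_add, map_sub, smul_eq_mul] at this
    simp only [he, hg, map_sub] at this
    linarith [this]
  have hle1 : f (q (m+1)) - f (q m) ≤ 0 := by linarith [hm (m+1)]
  have hle2 : f (q (m-1)) - f (q m) ≤ 0 := by linarith [hm (m-1)]
  have hmem : f (q m) < u := hfu (q m) (subset_convexHull ℝ _ ⟨m, rfl⟩)
  have : f y ≤ f (q m) := by
    nlinarith [mul_nonneg hApos.le (neg_nonneg.2 hle1), mul_nonneg hBpos.le (neg_nonneg.2 hle2)]
  linarith

lemma edge_ne (hn : 5 ≤ n) (hq : ConvexCCW q) (i : Fin n) : q (i+1) - q i ≠ 0 := by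
  intro h
  have h2 := hq i (i + (2:ℕ))
    (add_nat_ne i (by norm_num) (by omega))
    (by
      have h' : i + 1 = i + ((1:ℕ) : Fin n) := by push_cast; ring
      rw [h']
      exact shifts_ne i (show 2 < n by omega) (show 1 < n by omega) (by omega))
  rw [h] at h2
  simp [cross2] at h2

lemma mem_interior_of_inReg (hn : 5 ≤ n) (hq : ConvexCCW q) {x : ℝ × ℝ}
    (hx : ∀ i, 0 < sid q i x) : x ∈ interior (convexHull ℝ (Set.range q)) := by
  have hU : IsOpen {z : ℝ × ℝ | ∀ i, 0 < sid q i z} := by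
    have : {z : ℝ × ℝ | ∀ i, 0 < sid q i z} = ⋂ i, {z | 0 < sid q i z} := by
      ext z; simp
    rw [this]
    exact isOpen_iInter_of_finite fun i => isOpen_lt continuous_const (sid_continuous i)
  exact interior_maximal (fun z hz => inReg_subset_hull hn hq hz) hU hx

lemma inReg_of_mem_interior (hn : 5 ≤ n) (hq : ConvexCCW q) {x : ℝ × ℝ}
    (hx : x ∈ interior (convexHull ℝ (Set.range q))) (i : Fin n) : 0 < sid q i x := by
  have hxh : 0 ≤ sid q i x := hull_subset_halfplane hq i (interior_subset hx)
  rcases lt_or_eq_of_le hxh with h | h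
  · exact h
  exfalso
  -- points slightly off x in the decreasing direction stay in hull
  obtain ⟨ε, hε, hball⟩ := Metric.isOpen_iff.1 isOpen_interior x hx
  set E : ℝ × ℝ := q (i+1) - q i with hE
  have hEne : E ≠ 0 := edge_ne hn hq i
  set vec : ℝ × ℝ := (E.2, -E.1) with hvec
  have hvecne0 : vec ≠ 0 := by
    intro hc
    apply hEne
    have h1 : E.2 = 0 := congrArg Prod.fst hc
    have h2 : -E.1 = 0 := congrArg Prod.snd hc
    exact Prod.ext (neg_eq_zero.mp h2) h1
  have hvecne : ‖vec‖ ≠ 0 := norm_ne_zero_iff.2 hvecne0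
  set δ : ℝ := ε / (2 * ‖vec‖) with hδ
  have hδpos : 0 < δ := by
    apply div_pos hε
    positivity
  have hx' : x + δ • vec ∈ Metric.ball x ε := by
    simp only [Metric.mem_ball, dist_eq_norm, add_sub_cancel_left, norm_smul]
    rw [Real.norm_eq_abs, abs_of_pos hδpos, hδ]
    rw [div_mul_eq_mul_div, mul_comm]
    rw [div_lt_iff₀ (by positivity)]
    nlinarith [norm_pos_iff.2 hvecne0, hε]
  have hmem : x + δ • vec ∈ convexHull ℝ (Set.range q) := interior_subset (hball hx')
  have hnn := hull_subset_halfplane hq i hmem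
  simp only [Set.mem_setOf_eq] at hnn
  have hcalc : sid q i (x + δ • vec) = sid q i x - δ * (E.1^2 + E.2^2) := by
    simp only [sid, cross2, hvec, Prod.fst_sub, Prod.snd_sub, Prod.fst_add, Prod.snd_add,
      Prod.smul_fst, Prod.smul_snd, smul_eq_mul, hE]
    ring
  rw [hcalc, ← h] at hnn
  have hEsq : 0 < E.1^2 + E.2^2 := by
    by_contra hc
    push_neg at hc
    have h1 : E.1 = 0 := by nlinarith [sq_nonneg E.1, sq_nonneg E.2]
    have h2 : E.2 = 0 := by nlinarith [sq_nonneg E.1, sq_nonneg E.2]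
    exact hEne (Prod.ext h1 h2)
  nlinarith

end Hull


section Cross3

def det3 (a b c : Fin 3 → ℝ) : ℝ :=
  a 0 * (b 1 * c 2 - b 2 * c 1) - a 1 * (b 0 * c 2 - b 2 * c 0) + a 2 * (b 0 * c 1 - b 1 * c 0)

noncomputable def lift (z : ℝ × ℝ) : Fin 3 → ℝ := ![z.1, z.2, 1]

lemma pluecker1 (a b c d : Fin 3 → ℝ) :
    cross3 (cross3 a b) (cross3 c d) = (det3 a c d) • b - (det3 b c d) • a := by
  funext j; fin_cases j <;> simp [cross3, det3] <;> ring

lemma pluecker2 (a b c d : Fin 3 → ℝ) :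
    cross3 (cross3 a b) (cross3 c d) = (det3 a b d) • c - (det3 a b c) • d := by
  funext j; fin_cases j <;> simp [cross3, det3] <;> ring

lemma cross_cross_same (a b c : Fin 3 → ℝ) :
    cross3 (cross3 a b) (cross3 b c) = (det3 a b c) • b := by
  funext j; fin_cases j <;> simp [cross3, det3] <;> ring

lemma cross3_smul (s t : ℝ) (a b : Fin 3 → ℝ) :
    cross3 (s • a) (t • b) = (s * t) • cross3 a b := by
  funext j; fin_cases j <;> simp [cross3] <;> ring

lemma cross3_sub_smul (c1 c2 c3 c4 : ℝ) (x y : Fin 3 → ℝ) :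
    cross3 (c1 • x - c2 • y) (c3 • y - c4 • x) = (c1 * c3 - c2 * c4) • cross3 x y := by
  funext j; fin_cases j <;> simp [cross3] <;> ring

/-- the intersection-of-lines identity for affine lifts -/
lemma cross_cross_lift (A B C D : ℝ × ℝ) :
    cross3 (cross3 (lift A) (lift B)) (cross3 (lift C) (lift D))
      = (cross2 (B - A) (D - C) - cross2 (C - A) (D - C)) • lift A
        + (cross2 (C - A) (D - C)) • lift B := by
  funext j
  fin_cases j <;>
    simp [cross3, lift, cross2, Prod.fst_sub, Prod.snd_sub] <;> ring

lemma pairO_cross_lift (O A B : ℝ × ℝ) :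
    pairO O (cross3 (lift A) (lift B)) = cross2 (B - A) (O - A) := by
  simp [pairO, cross3, lift, cross2, Prod.fst_sub, Prod.snd_sub]; ring

lemma pairO_smul (O : ℝ × ℝ) (s : ℝ) (l : Fin 3 → ℝ) : pairO O (s • l) = s * pairO O l := by
  simp [pairO]; ring

def MO (O : ℝ × ℝ) (a : Fin 3 → ℝ) : Fin 3 → ℝ := ![a 0, a 1, a 2 - O.1 * a 0 - O.2 * a 1]
def MO' (O : ℝ × ℝ) (a : Fin 3 → ℝ) : Fin 3 → ℝ := ![a 0 + O.1 * a 2, a 1 + O.2 * a 2, a 2]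

lemma cross3_MO (O : ℝ × ℝ) (a b : Fin 3 → ℝ) :
    cross3 (MO O a) (MO O b) = MO' O (cross3 a b) := by
  funext j; fin_cases j <;> simp [cross3, MO, MO'] <;> ring

lemma cross3_MO' (O : ℝ × ℝ) (a b : Fin 3 → ℝ) :
    cross3 (MO' O a) (MO' O b) = MO O (cross3 a b) := by
  funext j; fin_cases j <;> simp [cross3, MO, MO'] <;> ring

lemma MO_smul (O : ℝ × ℝ) (s : ℝ) (a : Fin 3 → ℝ) : MO O (s • a) = s • MO O a := by
  funext j; fin_cases j <;> simp [MO] <;> ring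

lemma pairO_MO_lift (O : ℝ × ℝ) (z : ℝ × ℝ) : pairO O (MO O (lift z)) = 1 := by
  simp [pairO, MO, lift]; ring

lemma covector_lift (O : ℝ × ℝ) (l : Fin 3 → ℝ) (h : pairO O l ≠ 0) :
    l = (pairO O l) • MO O (lift (dehomDual O l)) := by
  funext j
  fin_cases j <;> simp [MO, lift, dehomDual] <;> field_simp <;> simp [pairO] <;> ring

lemma dehomDual_smul (O : ℝ × ℝ) {s : ℝ} (hs : s ≠ 0) (l : Fin 3 → ℝ) :
    dehomDual O (s • l) = dehomDual O l := by
  simp only [dehomDual, pairO_smul]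
  have h1 : (s • l) 0 = s * l 0 := rfl
  have h2 : (s • l) 1 = s * l 1 := rfl
  rw [h1, h2]
  rcases eq_or_ne (pairO O l) 0 with h | h
  · simp [h]
  · field_simp

lemma dehomDual_MO_lift (O : ℝ × ℝ) {s : ℝ} (hs : s ≠ 0) (z : ℝ × ℝ) :
    dehomDual O (s • MO O (lift z)) = z := by
  rw [dehomDual_smul O hs]
  rw [dehomDual, pairO_MO_lift O z]
  have h0 : MO O (lift z) 0 = z.1 := rfl
  have h1 : MO O (lift z) 1 = z.2 := rfl
  rw [h0, h1]
  simp

def T2 (z : ℝ × ℝ) : ℝ × ℝ := (z.1, -z.2)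
def T3 (a : Fin 3 → ℝ) : Fin 3 → ℝ := ![a 0, -(a 1), a 2]

lemma T3_lift (z : ℝ × ℝ) : T3 (lift z) = lift (T2 z) := by
  funext j; fin_cases j <;> simp [T3, T2, lift]

lemma T3_smul (s : ℝ) (a : Fin 3 → ℝ) : T3 (s • a) = s • T3 a := by
  funext j; fin_cases j <;> simp [T3] <;> ring

lemma cross3_T3 (a b : Fin 3 → ℝ) : cross3 (T3 a) (T3 b) = (-1 : ℝ) • T3 (cross3 a b) := by
  funext j; fin_cases j <;> simp [cross3, T3] <;> ring

end Cross3

section Pentagram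

variable {n : ℕ} [NeZero n]

lemma pentagramD_MO (O : ℝ × ℝ) (l : Fin n → Fin 3 → ℝ) :
    pentagramD (fun i => MO O (l i)) = fun i => MO O (pentagramD l i) := by
  funext i
  simp only [pentagramD, cross3_MO, cross3_MO']

lemma pentagramD_T3 (l : Fin n → Fin 3 → ℝ) :
    pentagramD (fun i => T3 (l i)) = fun i => (-1 : ℝ) • T3 (pentagramD l i) := by
  funext i
  show cross3 (cross3 (T3 (l (i-1))) (T3 (l (i+1)))) (cross3 (T3 (l i)) (T3 (l (i+2)))) = _
  rw [cross3_T3, cross3_T3, cross3_smul, cross3_T3]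
  norm_num
  rfl

lemma pentagramD_smul (s : Fin n → ℝ) (l : Fin n → Fin 3 → ℝ) :
    pentagramD (fun i => s i • l i) = fun i =>
      (s (i-1) * s (i+1) * (s i * s (i+2))) • pentagramD l i := by
  funext i
  simp only [pentagramD, cross3_smul]

lemma pentagramD_shift (c : Fin n) (l : Fin n → Fin 3 → ℝ) :
    pentagramD (fun i => l (i + c)) = fun i => pentagramD l (i + c) := by
  funext i
  simp only [pentagramD]
  rw [show (i-1)+c = (i+c)-1 by ring, show (i+1)+c = (i+c)+1 by ring,
    show (i+2)+c = (i+c)+2 by ring]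

/-- the key duality shift: `D ∘ S` is a projective shift -/
lemma DS_shift (x : Fin n → Fin 3 → ℝ) (i : Fin n) :
    ∃ s : ℝ, pentagramD (pentagramS x) i = s • x (i + 1) := by
  have formA : ∀ j : Fin n, pentagramS x j
      = det3 (x (j-1)) (x (j+1)) (x (j+2)) • x j - det3 (x j) (x (j+1)) (x (j+2)) • x (j-1) :=
    fun j => pluecker1 _ _ _ _
  have formB : ∀ j : Fin n, pentagramS x j
      = det3 (x (j-1)) (x j) (x (j+2)) • x (j+1) - det3 (x (j-1)) (x j) (x (j+1)) • x (j+2) :=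
    fun j => pluecker2 _ _ _ _
  have e1 : (i - 1) - 1 = i - 2 := by ring
  have e2 : (i - 1) + 1 = i := by ring
  have e3 : (i - 1) + 2 = i + 1 := by ring
  have e4 : (i + 1) - 1 = i := by ring
  have e5 : (i + 1) + 1 = i + 2 := by ring
  have e6 : (i + 1) + 2 = i + 3 := by ring
  have hX : cross3 (pentagramS x (i-1)) (pentagramS x (i+1))
      = ((det3 (x (i-2)) (x (i-1)) (x (i+1))) * (det3 (x i) (x (i+2)) (x (i+3)))
        - (det3 (x (i-2)) (x (i-1)) (x i)) * (det3 (x (i+1)) (x (i+2)) (x (i+3))))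
        • cross3 (x i) (x (i+1)) := by
    rw [formB (i-1), formA (i+1), e1, e2, e3, e4, e5, e6]
    exact cross3_sub_smul _ _ _ _ _ _
  have e7 : (i + 2) - 1 = i + 1 := by ring
  have e8 : (i + 2) + 1 = i + 3 := by ring
  have e9 : (i + 2) + 2 = i + 4 := by ring
  have hY : cross3 (pentagramS x i) (pentagramS x (i+2))
      = ((det3 (x (i-1)) (x i) (x (i+2))) * (det3 (x (i+1)) (x (i+3)) (x (i+4)))
        - (det3 (x (i-1)) (x i) (x (i+1))) * (det3 (x (i+2)) (x (i+3)) (x (i+4))))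
        • cross3 (x (i+1)) (x (i+2)) := by
    rw [formB i, formA (i+2), e7, e8, e9]
    exact cross3_sub_smul _ _ _ _ _ _
  refine ⟨(det3 (x (i-2)) (x (i-1)) (x (i+1)) * det3 (x i) (x (i+2)) (x (i+3))
        - det3 (x (i-2)) (x (i-1)) (x i) * det3 (x (i+1)) (x (i+2)) (x (i+3)))
      * ((det3 (x (i-1)) (x i) (x (i+2)) * det3 (x (i+1)) (x (i+3)) (x (i+4))
        - det3 (x (i-1)) (x i) (x (i+1)) * det3 (x (i+2)) (x (i+3)) (x (i+4)))
      * det3 (x i) (x (i+1)) (x (i+2))), ?_⟩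
  show cross3 (cross3 (pentagramS x (i-1)) (pentagramS x (i+1)))
      (cross3 (pentagramS x i) (pentagramS x (i+2))) = _
  rw [hX, hY, cross3_smul, cross_cross_same, smul_smul, mul_assoc]

end Pentagram

section DStep

variable {n : ℕ} [NeZero n] {q : Fin n → ℝ × ℝ}

lemma cast_nm1 : ((n-1 : ℕ) : Fin n) = -1 := by
  have h0 : 0 < n := Nat.pos_of_ne_zero (NeZero.ne n)
  apply eq_neg_of_add_eq_zero_left
  have h1 : ((n-1 : ℕ) : Fin n) + ((1 : ℕ) : Fin n) = ((n - 1 + 1 : ℕ) : Fin n) :=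
    (Nat.cast_add _ _).symm
  rw [Nat.cast_one] at h1
  rw [h1, Nat.sub_add_cancel h0, Fin.natCast_self]

lemma shift_ne_shift' (i : Fin n) {a b : ℕ} (ha : a < n) (hb : b < n) (hab : a ≠ b)
    {x y : Fin n} (hx : x = i + (a : ℕ)) (hy : y = i + (b : ℕ)) : x ≠ y := by
  rw [hx, hy]; exact shifts_ne i ha hb hab

lemma cross2_smul_right (a b : ℝ × ℝ) (t : ℝ) : cross2 a (t • b) = t * cross2 a b := by
  simp [cross2]; ring

lemma det2_line (a b : ℝ × ℝ) (s : ℝ) : det2 a b (a + s • (b - a)) = 0 := by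
  simp [det2_def, Prod.smul_fst, Prod.smul_snd, smul_eq_mul]; ring

lemma det2_affine_diff (a b u w : ℝ × ℝ) :
    det2 a b u - det2 a b w = cross2 (b - a) (u - w) := by
  simp only [det2_def, cross2, Prod.fst_sub, Prod.snd_sub]; ring

lemma det2_comb2 (a b x y : ℝ × ℝ) (s : ℝ) :
    det2 a b (x + s • (y - x)) = (1 - s) * det2 a b x + s * det2 a b y := by
  simp only [det2_def, Prod.fst_add, Prod.snd_add, Prod.smul_fst, Prod.smul_snd,
    Prod.fst_sub, Prod.snd_sub, smul_eq_mul]; ring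

lemma sid_comb2 (i : Fin n) (x y : ℝ × ℝ) (s : ℝ) :
    sid q i (x + s • (y - x)) = (1 - s) * sid q i x + s * sid q i y := by
  simp only [sid, cross2, Prod.fst_add, Prod.snd_add, Prod.smul_fst, Prod.smul_snd,
    Prod.fst_sub, Prod.snd_sub, smul_eq_mul]; ring

noncomputable def Dmap (q : Fin n → ℝ × ℝ) (i : Fin n) : ℝ × ℝ :=
  q (i-1) + (det2 (q (i-1)) (q i) (q (i+2)) /
      cross2 (q (i+1) - q (i-1)) (q (i+2) - q i)) • (q (i+1) - q (i-1))

section Facts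
variable (hn : 5 ≤ n) (hq : ConvexCCW q)
include hn hq

lemma det2_consec (v : Fin n) : 0 < det2 (q (v-1)) (q v) (q (v+1)) := by
  have h := turn_pos hn hq v
  have : det2 (q (v-1)) (q v) (q (v+1)) = cross2 (q v - q (v-1)) (q (v+1) - q v) := by
    simp only [det2_def, cross2, Prod.fst_sub, Prod.snd_sub]; ring
  linarith [this ▸ h]

lemma det2_consec' (v : Fin n) : 0 < det2 (q v) (q (v+1)) (q (v+2)) := by
  have h := det2_consec hn hq (v+1)
  have e1 : (v+1) - 1 = v := by ring
  have e2 : (v+1) + 1 = v + 2 := by ring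
  rw [e1, e2] at h
  exact h

/-- CH specialized: `0 < det2 (q (v-1)) (q (v+1)) (q (v+2))` -/
lemma CH2 (v : Fin n) : 0 < det2 (q (v-1)) (q (v+1)) (q (v+2)) := by
  refine CH hn hq v (v+2) ?_ ?_ ?_
  · exact shift_ne_shift' v (a := 2) (b := n-1) (by omega) (by omega) (by omega)
      (by push_cast; ring) (by rw [cast_nm1]; push_cast; ring)
  · exact shift_ne_shift' v (a := 2) (b := 0) (by omega) (by omega) (by omega)
      (by push_cast; ring) (by push_cast; ring)
  · exact shift_ne_shift' v (a := 2) (b := 1) (by omega) (by omega) (by omega)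
      (by push_cast; ring) (by push_cast; ring)

/-- CH specialized: `0 < det2 (q (v-1)) (q (v+1)) (q (v+3))` -/
lemma CH3 (v : Fin n) : 0 < det2 (q (v-1)) (q (v+1)) (q (v+3)) := by
  refine CH hn hq v (v+3) ?_ ?_ ?_
  · exact shift_ne_shift' v (a := 3) (b := n-1) (by omega) (by omega) (by omega)
      (by push_cast; ring) (by rw [cast_nm1]; push_cast; ring)
  · exact shift_ne_shift' v (a := 3) (b := 0) (by omega) (by omega) (by omega)
      (by push_cast; ring) (by push_cast; ring)
  · exact shift_ne_shift' v (a := 3) (b := 1) (by omega) (by omega) (by omega)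
      (by push_cast; ring) (by push_cast; ring)

lemma Xi_pos (i : Fin n) : 0 < cross2 (q (i+1) - q (i-1)) (q (i+2) - q i) := by
  have h1 := CH2 hn hq i
  have h2 := det2_consec hn hq i
  have key : cross2 (q (i+1) - q (i-1)) (q (i+2) - q i)
      = det2 (q (i-1)) (q (i+1)) (q (i+2)) + det2 (q (i-1)) (q i) (q (i+1)) := by
    simp only [det2_def, cross2, Prod.fst_sub, Prod.snd_sub]; ring
  linarith [key]

lemma snum_pos (i : Fin n) : 0 < det2 (q (i-1)) (q i) (q (i+2)) := by
  have hne1 : i + 2 ≠ i - 1 :=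
    shift_ne_shift' i (a := 2) (b := n-1) (by omega) (by omega) (by omega)
      (by push_cast; ring) (by rw [cast_nm1]; push_cast; ring)
  have hne2 : i + 2 ≠ (i - 1) + 1 := by
    rw [show (i-1) + 1 = i by ring]
    exact shift_ne_shift' i (a := 2) (b := 0) (by omega) (by omega) (by omega)
      (by push_cast; ring) (by push_cast; ring)
  have h := hq (i-1) (i+2) hne1 hne2
  rw [show (i-1) + 1 = i by ring] at h
  have heq : det2 (q (i-1)) (q i) (q (i+2)) = cross2 (q i - q (i-1)) (q (i+2) - q (i-1)) := by
    simp only [det2_def, cross2, Prod.fst_sub, Prod.snd_sub]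
  rw [heq]
  exact h

lemma s_lt_Xi (i : Fin n) : det2 (q (i-1)) (q i) (q (i+2))
    < cross2 (q (i+1) - q (i-1)) (q (i+2) - q i) := by
  have h := det2_consec' hn hq i
  have key : cross2 (q (i+1) - q (i-1)) (q (i+2) - q i) - det2 (q (i-1)) (q i) (q (i+2))
      = det2 (q i) (q (i+1)) (q (i+2)) := by
    simp only [det2_def, cross2, Prod.fst_sub, Prod.snd_sub]; ring
  linarith [key]

/-- second parametrization: `Dmap q i` lies on segment `(q i, q (i+2))`. -/
lemma Dmap_seg2 (i : Fin n) : Dmap q i = q i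
    + (det2 (q (i-1)) (q i) (q (i+1)) / cross2 (q (i+1) - q (i-1)) (q (i+2) - q i))
      • (q (i+2) - q i) := by
  have hXi := Xi_pos hn hq i
  have hne : cross2 (q (i+1) - q (i-1)) (q (i+2) - q i) ≠ 0 := ne_of_gt hXi
  rw [Dmap]
  have h1 : (q (i-1) + (det2 (q (i-1)) (q i) (q (i+2)) /
      cross2 (q (i+1) - q (i-1)) (q (i+2) - q i)) • (q (i+1) - q (i-1))).1
      = (q i + (det2 (q (i-1)) (q i) (q (i+1)) /
      cross2 (q (i+1) - q (i-1)) (q (i+2) - q i)) • (q (i+2) - q i)).1 := by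
    simp only [Prod.fst_add, Prod.smul_fst, Prod.fst_sub, smul_eq_mul]
    field_simp
    simp only [det2_def, cross2, Prod.fst_sub, Prod.snd_sub]
    ring
  have h2 : (q (i-1) + (det2 (q (i-1)) (q i) (q (i+2)) /
      cross2 (q (i+1) - q (i-1)) (q (i+2) - q i)) • (q (i+1) - q (i-1))).2
      = (q i + (det2 (q (i-1)) (q i) (q (i+1)) /
      cross2 (q (i+1) - q (i-1)) (q (i+2) - q i)) • (q (i+2) - q i)).2 := by
    simp only [Prod.snd_add, Prod.smul_snd, Prod.snd_sub, smul_eq_mul]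
    field_simp
    simp only [det2_def, cross2, Prod.fst_sub, Prod.snd_sub]
    ring
  exact Prod.ext h1 h2

lemma Dmap_inside (i j : Fin n) : 0 < sid q j (Dmap q i) := by
  have hXi := Xi_pos hn hq i
  set s := det2 (q (i-1)) (q i) (q (i+2)) /
      cross2 (q (i+1) - q (i-1)) (q (i+2) - q i) with hs
  have hs0 : 0 < s := div_pos (snum_pos hn hq i) hXi
  have hs1 : s < 1 := (div_lt_one hXi).2 (s_lt_Xi hn hq i)
  have hcomb : sid q j (Dmap q i)
      = (1 - s) * sid q j (q (i-1)) + s * sid q j (q (i+1)) := by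
    rw [Dmap, ← hs]
    have : q (i-1) + s • (q (i+1) - q (i-1))
        = q (i-1) + s • (q (i+1) - q (i-1)) := rfl
    rw [sid_comb2]
  rw [hcomb]
  have hm1 : 0 ≤ sid q j (q (i-1)) := sid_vertex_nonneg hq j (i-1)
  have hp1 : 0 ≤ sid q j (q (i+1)) := sid_vertex_nonneg hq j (i+1)
  -- at least one is strictly positive
  rcases eq_or_ne (i+1) j with h1 | h1
  · -- then i-1 ∉ {j, j+1}
    have hne1 : i - 1 ≠ j := by
      rw [← h1]
      exact shift_ne_shift' i (a := n-1) (b := 1) (by omega) (by omega) (by omega)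
        (by rw [cast_nm1]; push_cast; ring) (by push_cast; ring)
    have hne2 : i - 1 ≠ j + 1 := by
      rw [← h1]
      exact shift_ne_shift' i (a := n-1) (b := 2) (by omega) (by omega) (by omega)
        (by rw [cast_nm1]; push_cast; ring) (by push_cast; ring)
    have hstrict : 0 < sid q j (q (i-1)) := hq j (i-1) hne1 hne2
    nlinarith [mul_pos (show (0:ℝ) < 1 - s by linarith) hstrict, mul_nonneg hs0.le hp1]
  rcases eq_or_ne (i+1) (j+1) with h2 | h2
  · -- i = j, so i-1 ∉ {j, j+1}
    have hij : i = j := by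
      have := congrArg (fun z => z - 1) h2
      simpa using this
    have hne1 : i - 1 ≠ j := by
      rw [← hij]
      exact shift_ne_shift' i (a := n-1) (b := 0) (by omega) (by omega) (by omega)
        (by rw [cast_nm1]; push_cast; ring) (by push_cast; ring)
    have hne2 : i - 1 ≠ j + 1 := by
      rw [← hij]
      exact shift_ne_shift' i (a := n-1) (b := 1) (by omega) (by omega) (by omega)
        (by rw [cast_nm1]; push_cast; ring) (by push_cast; ring)
    have hstrict : 0 < sid q j (q (i-1)) := hq j (i-1) hne1 hne2
    nlinarith [mul_pos (show (0:ℝ) < 1 - s by linarith) hstrict, mul_nonneg hs0.le hp1]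
  · have hstrict : 0 < sid q j (q (i+1)) := hq j (i+1) h1 h2
    nlinarith [mul_pos hs0 hstrict, mul_nonneg (show (0:ℝ) ≤ 1 - s by linarith) hm1]

/-- on the line `(q i, q (i+2))`: value of chord functional vanishes -/
lemma Dmap_on_line (i : Fin n) : det2 (q i) (q (i+2)) (Dmap q i) = 0 := by
  rw [Dmap_seg2 hn hq i]
  exact det2_line _ _ _

end Facts
end DStep

section DStep2

variable {n : ℕ} [NeZero n] {q : Fin n → ℝ × ℝ}

lemma det2_self2 (a b : ℝ × ℝ) : det2 a b b = 0 := by simp only [det2_def]; ring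
lemma det2_self1 (a b : ℝ × ℝ) : det2 a b a = 0 := by simp only [det2_def]; ring

lemma cross2_smul_left (a b : ℝ × ℝ) (t : ℝ) : cross2 (t • a) b = t * cross2 a b := by
  simp [cross2]; ring

section Facts2
variable (hn : 5 ≤ n) (hq : ConvexCCW q)
include hn hq

lemma Dmap_next (i : Fin n) : Dmap q (i+1) = q i
    + (det2 (q i) (q (i+1)) (q (i+3)) / cross2 (q (i+2) - q i) (q (i+3) - q (i+1)))
      • (q (i+2) - q i) := by
  rw [Dmap]
  have e1 : (i+1) - 1 = i := by ring
  have e2 : (i+1) + 1 = i + 2 := by ring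
  have e3 : (i+1) + 2 = i + 3 := by ring
  rw [e1, e2, e3]

lemma Dmap_next_seg (i : Fin n) : Dmap q (i+1) = q (i+1)
    + (det2 (q i) (q (i+1)) (q (i+2)) / cross2 (q (i+2) - q i) (q (i+3) - q (i+1)))
      • (q (i+3) - q (i+1)) := by
  have h := Dmap_seg2 hn hq (i+1)
  have e1 : (i+1) - 1 = i := by ring
  have e2 : (i+1) + 1 = i + 2 := by ring
  have e3 : (i+1) + 2 = i + 3 := by ring
  rw [e1, e2, e3] at h
  exact h

lemma Xi_pos' (i : Fin n) : 0 < cross2 (q (i+2) - q i) (q (i+3) - q (i+1)) := by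
  have h := Xi_pos hn hq (i+1)
  have e1 : (i+1) - 1 = i := by ring
  have e2 : (i+1) + 1 = i + 2 := by ring
  have e3 : (i+1) + 2 = i + 3 := by ring
  rw [e1, e2, e3] at h
  exact h

lemma Dmap_dir (i : Fin n) : ∃ t : ℝ, 0 < t ∧
    Dmap q (i+1) - Dmap q i = t • (q (i+2) - q i) := by
  have hXi := Xi_pos hn hq i
  have hXi' := Xi_pos' hn hq i
  set σ := det2 (q i) (q (i+1)) (q (i+3)) / cross2 (q (i+2) - q i) (q (i+3) - q (i+1)) with hσ
  set s' := det2 (q (i-1)) (q i) (q (i+1)) / cross2 (q (i+1) - q (i-1)) (q (i+2) - q i) with hs'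
  refine ⟨σ - s', ?_, ?_⟩
  · -- positivity via the auxiliary functional ψ = det2 (q (i-1)) (q (i+1)) ·
    have hψ1 : det2 (q (i-1)) (q (i+1)) (Dmap q i) = 0 := by
      rw [Dmap]; exact det2_line _ _ _
    have hψ2 : 0 < det2 (q (i-1)) (q (i+1)) (Dmap q (i+1)) := by
      rw [Dmap_next_seg hn hq i, det2_comb2]
      rw [det2_self2]
      have hCH3 := CH3 hn hq i
      have hs'' : 0 < det2 (q i) (q (i+1)) (q (i+2)) /
          cross2 (q (i+2) - q i) (q (i+3) - q (i+1)) :=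
        div_pos (det2_consec' hn hq i) hXi'
      nlinarith [hs'', hCH3]
    have hdiff : det2 (q (i-1)) (q (i+1)) (Dmap q (i+1)) - det2 (q (i-1)) (q (i+1)) (Dmap q i)
        = cross2 (q (i+1) - q (i-1)) (Dmap q (i+1) - Dmap q i) := det2_affine_diff _ _ _ _
    have hDD : Dmap q (i+1) - Dmap q i = (σ - s') • (q (i+2) - q i) := by
      rw [Dmap_next hn hq i, Dmap_seg2 hn hq i, ← hσ, ← hs']
      rw [add_sub_add_comm, sub_self, zero_add, ← sub_smul]
    rw [hDD, cross2_smul_right] at hdiff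
    rw [hψ1, sub_zero] at hdiff
    nlinarith [hψ2, hdiff, hXi]
  · rw [Dmap_next hn hq i, Dmap_seg2 hn hq i, ← hσ, ← hs']
    rw [add_sub_add_comm, sub_self, zero_add, ← sub_smul]

/-- chord values: `det2 (q i) (q (i+2)) (q m) ≥ 0` for `m ≠ i+1` -/
lemma chord_nonneg (i m : Fin n) (hm : m ≠ i + 1) : 0 ≤ det2 (q i) (q (i+2)) (q m) := by
  rcases eq_or_ne m i with rfl | h1
  · rw [det2_self1]
  rcases eq_or_ne m (i+2) with rfl | h2
  · rw [det2_self2]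
  have h := CH hn hq (i+1) m ?c1 ?c2 ?c3
  case c1 => rwa [show (i+1) - 1 = i by ring]
  case c2 => exact hm
  case c3 => rwa [show (i+1) + 1 = i + 2 by ring]
  rw [show (i+1) - 1 = i by ring, show (i+1) + 1 = i + 2 by ring] at h
  exact h.le

lemma chord_pos (i m : Fin n) (hm : m ≠ i + 1) (h1 : m ≠ i) (h2 : m ≠ i + 2) :
    0 < det2 (q i) (q (i+2)) (q m) := by
  have h := CH hn hq (i+1) m ?c1 ?c2 ?c3
  case c1 => rwa [show (i+1) - 1 = i by ring]
  case c2 => exact hm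
  case c3 => rwa [show (i+1) + 1 = i + 2 by ring]
  rwa [show (i+1) - 1 = i by ring, show (i+1) + 1 = i + 2 by ring] at h

lemma chord_Dmap_pos (i j : Fin n) (hj1 : j ≠ i) (hj2 : j ≠ i + 1) :
    0 < det2 (q i) (q (i+2)) (Dmap q j) := by
  rcases eq_or_ne j (i+2) with rfl | hj3
  · -- use the second segment parametrization based at q (i+2)
    have h := Dmap_next_seg hn hq (i+1)
    rw [show (i+1) + 1 = i + 2 by ring, show (i+1) + 2 = i + 3 by ring,
        show (i+1) + 3 = i + 4 by ring] at h
    rw [h, det2_comb2, det2_self2]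
    have hu : 0 < det2 (q (i+1)) (q (i+2)) (q (i+3)) /
        cross2 (q (i+3) - q (i+1)) (q (i+4) - q (i+2)) := by
      apply div_pos
      · have := det2_consec' hn hq (i+1)
        rwa [show (i+1) + 1 = i + 2 by ring, show (i+1) + 2 = i + 3 by ring] at this
      · have := Xi_pos' hn hq (i+1)
        rwa [show (i+1) + 2 = i + 3 by ring, show (i+1) + 3 = i + 4 by ring,
          show (i+1) + 1 = i + 2 by ring] at this
    have hch : 0 < det2 (q i) (q (i+2)) (q (i+4)) := by
      have := CH3 hn hq (i+1)
      rwa [show (i+1) - 1 = i by ring, show (i+1) + 1 = i + 2 by ring,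
        show (i+1) + 3 = i + 4 by ring] at this
    nlinarith [hu, hch]
  · -- generic: combination of q (j-1) and q (j+1)
    have hXj := Xi_pos hn hq j
    set sj := det2 (q (j-1)) (q j) (q (j+2)) /
        cross2 (q (j+1) - q (j-1)) (q (j+2) - q j) with hsj
    have hs0 : 0 < sj := div_pos (snum_pos hn hq j) hXj
    have hs1 : sj < 1 := (div_lt_one hXj).2 (s_lt_Xi hn hq j)
    have hcomb : det2 (q i) (q (i+2)) (Dmap q j)
        = (1 - sj) * det2 (q i) (q (i+2)) (q (j-1)) + sj * det2 (q i) (q (i+2)) (q (j+1)) := by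
      rw [Dmap, ← hsj, det2_comb2]
    rw [hcomb]
    have hm1ne : j - 1 ≠ i + 1 := by
      intro h
      apply hj3
      have := congrArg (fun z => z + 1) h
      simp only [sub_add_cancel] at this
      rw [this]; ring
    have hp1ne : j + 1 ≠ i + 1 := fun h => hj1 (by
      have := congrArg (fun z => z - 1) h
      simpa using this)
    have ht1 : 0 ≤ det2 (q i) (q (i+2)) (q (j-1)) := chord_nonneg hn hq i _ hm1ne
    have ht2 : 0 ≤ det2 (q i) (q (i+2)) (q (j+1)) := chord_nonneg hn hq i _ hp1ne
    -- strictness case analysis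
    rcases eq_or_ne (j-1) i with he1 | he1
    · -- j = i+1 contradiction? no: j - 1 = i gives j = i + 1, contradicting hj2
      exfalso
      apply hj2
      have := congrArg (fun z => z + 1) he1
      simpa using this
    rcases eq_or_ne (j-1) (i+2) with he2 | he2
    · -- j = i + 3 ; then j + 1 = i + 4 ∉ {i, i+1, i+2}
      have hj4 : j = i + 3 := by
        have := congrArg (fun z => z + 1) he2
        simp only [sub_add_cancel] at this
        rw [this]; ring
      have hja : j + 1 ≠ i := by
        rw [hj4]
        exact shift_ne_shift' i (a := 4) (b := 0) (by omega) (by omega) (by omega)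
          (by push_cast; ring) (by push_cast; ring)
      have hjb : j + 1 ≠ i + 2 := by
        rw [hj4]
        exact shift_ne_shift' i (a := 4) (b := 2) (by omega) (by omega) (by omega)
          (by push_cast; ring) (by push_cast; ring)
      have := chord_pos hn hq i (j+1) hp1ne hja hjb
      nlinarith [this]
    · -- j - 1 ∉ {i, i+1, i+2} : strict term1
      have := chord_pos hn hq i (j-1) hm1ne he1 he2
      nlinarith [this]

lemma Dmap_convex : ConvexCCW (Dmap q) := by
  intro i j hj1 hj2
  obtain ⟨t, ht, hdiff⟩ := Dmap_dir hn hq i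
  rw [hdiff, cross2_smul_left]
  have hline : cross2 (q (i+2) - q i) (Dmap q j - Dmap q i)
      = det2 (q i) (q (i+2)) (Dmap q j) - det2 (q i) (q (i+2)) (Dmap q i) :=
    (det2_affine_diff _ _ _ _).symm
  rw [hline, Dmap_on_line hn hq i, sub_zero]
  exact mul_pos ht (chord_Dmap_pos hn hq i j hj1 hj2)

/-- lift compatibility of the chart pentagram map -/
lemma Dmap_lift (l : Fin n → Fin 3 → ℝ) (lam : Fin n → ℝ)
    (hl : ∀ i, l i = lam i • lift (q i)) (i : Fin n) :
    pentagramD l i = ((lam (i-1) * lam (i+1) * (lam i * lam (i+2)))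
      * cross2 (q (i+1) - q (i-1)) (q (i+2) - q i)) • lift (Dmap q i) := by
  have hXi := Xi_pos hn hq i
  have hne : cross2 (q (i+1) - q (i-1)) (q (i+2) - q i) ≠ 0 := ne_of_gt hXi
  rw [pentagramD, hl (i-1), hl (i+1), hl i, hl (i+2)]
  rw [cross3_smul, cross3_smul, cross3_smul]
  rw [cross_cross_lift]
  set Ξ := cross2 (q (i+1) - q (i-1)) (q (i+2) - q i) with hΞ
  set M := cross2 (q i - q (i-1)) (q (i+2) - q i) with hM
  have hMeq : M = det2 (q (i-1)) (q i) (q (i+2)) := by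
    simp only [hM, det2_def, cross2, Prod.fst_sub, Prod.snd_sub]; ring
  have hΞ2 : cross2 (q (i+1) - q (i-1)) (q (i+2) - q i) = Ξ := rfl
  have key : (Ξ - M) • lift (q (i-1)) + M • lift (q (i+1)) = Ξ • lift (Dmap q i) := by
    funext m
    fin_cases m <;>
      simp only [lift, Dmap, ← hΞ, hMeq, Pi.add_apply, Pi.smul_apply, smul_eq_mul,
        Fin.reduceFinMk, Fin.zero_eta, Fin.mk_one,
        Matrix.cons_val_zero, Matrix.cons_val_one, Matrix.head_cons,
        Matrix.cons_val_two, Matrix.tail_cons, Prod.fst_add, Prod.snd_add,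
        Prod.smul_fst, Prod.smul_snd, Prod.fst_sub, Prod.snd_sub] <;>
      field_simp <;> ring
  rw [key, smul_smul]

end Facts2
end DStep2

section Dual

variable {n : ℕ} [NeZero n]

/-- rotate by 90°: (x,y) ↦ (-y,x) -/
def rot (e : ℝ × ℝ) : ℝ × ℝ := (-e.2, e.1)

/-- dual polygon with respect to polarity centered at the origin -/
noncomputable def dual0 (q : Fin n → ℝ × ℝ) (i : Fin n) : ℝ × ℝ :=
  (cross2 (q i) (q (i+1)))⁻¹ • rot (q (i+1) - q i)

lemma dual0_1 (q : Fin n → ℝ × ℝ) (i : Fin n) :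
    (dual0 q i).1 = -((q (i+1)).2 - (q i).2) / cross2 (q i) (q (i+1)) := by
  simp [dual0, rot, Prod.smul_fst, Prod.snd_sub, smul_eq_mul]
  ring
lemma dual0_2 (q : Fin n → ℝ × ℝ) (i : Fin n) :
    (dual0 q i).2 = ((q (i+1)).1 - (q i).1) / cross2 (q i) (q (i+1)) := by
  simp [dual0, rot, Prod.smul_snd, Prod.fst_sub, smul_eq_mul]
  ring

lemma det2_cross2_sum (x y z : ℝ × ℝ) : det2 x y z = cross2 x y + cross2 y z + cross2 z x := by
  simp only [det2_def, cross2]; ring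

lemma cross2_smul_smul (s t : ℝ) (a b : ℝ × ℝ) : cross2 (s • a) (t • b) = s * t * cross2 a b := by
  simp only [cross2, Prod.smul_fst, Prod.smul_snd, smul_eq_mul]; ring

lemma cross2_rot (a b : ℝ × ℝ) : cross2 (rot a) (rot b) = cross2 a b := by
  simp only [cross2, rot]; ring

/-- the key factorization for the dual triple determinant -/
lemma dual_det_identity (x0 x1 x2 u0 u1 : ℝ × ℝ)
    (h01 : cross2 x0 x1 ≠ 0) (h12 : cross2 x1 x2 ≠ 0) (hu : cross2 u0 u1 ≠ 0) :
    det2 ((cross2 x0 x1)⁻¹ • rot (x1 - x0)) ((cross2 x1 x2)⁻¹ • rot (x2 - x1))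
        ((cross2 u0 u1)⁻¹ • rot (u1 - u0))
      * (cross2 x0 x1 * cross2 x1 x2 * cross2 u0 u1)
      = det2 x0 x1 x2 * det2 x1 u0 u1 := by
  rw [det2_cross2_sum, cross2_smul_smul, cross2_smul_smul, cross2_smul_smul,
    cross2_rot, cross2_rot, cross2_rot]
  field_simp
  simp only [cross2, det2_def, Prod.fst_sub, Prod.snd_sub]
  ring

/-- the origin-pairing of an edge of any polygon -/
lemma sid_zero (q : Fin n → ℝ × ℝ) (i : Fin n) :
    sid q i ((0:ℝ), (0:ℝ)) = cross2 (q i) (q (i+1)) := by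
  simp only [sid, cross2, Prod.fst_sub, Prod.snd_sub]; ring

/-- dual polygon of a convex polygon with the origin inside is convex -/
lemma dual_convex {q : Fin n → ℝ × ℝ} (hn : 5 ≤ n) (hq : ConvexCCW q)
    (hγ : ∀ i, 0 < cross2 (q i) (q (i+1))) : ConvexCCW (dual0 q) := by
  intro i j hj1 hj2
  have key := dual_det_identity (q i) (q (i+1)) (q (i+2)) (q j) (q (j+1))
    (ne_of_gt (hγ i)) (by rw [show q (i+2) = q ((i+1)+1) from by rw [show (i+1)+1 = i+2 by ring]]; exact ne_of_gt (hγ (i+1))) (ne_of_gt (hγ j))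
  have hd1 : dual0 q (i+1) = (cross2 (q (i+1)) (q (i+2)))⁻¹ • rot (q (i+2) - q (i+1)) := by
    rw [dual0, show (i+1)+1 = i+2 by ring]
  have hg2 : (0:ℝ) < cross2 (q (i+1)) (q (i+2)) := by
    have := hγ (i+1); rwa [show (i+1)+1 = i+2 by ring] at this
  have hpos1 : 0 < det2 (q i) (q (i+1)) (q (i+2)) := det2_consec' hn hq i
  have hpos2 : 0 < det2 (q (i+1)) (q j) (q (j+1)) := by
    have h : 0 < sid q j (q (i+1)) := hq j (i+1) (fun h => hj2 h.symm) (fun h => hj1 (by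
      have h2 := congrArg (fun z => z - 1) h
      simp only [add_sub_cancel_right] at h2
      exact h2.symm))
    rw [sid_eq_det2] at h
    rw [det2_cyc]
    exact h
  have hsg : sid (dual0 q) i (dual0 q j) = det2 (dual0 q i) (dual0 q (i+1)) (dual0 q j) :=
    sid_eq_det2 _ _ _
  show 0 < cross2 (dual0 q (i+1) - dual0 q i) (dual0 q j - dual0 q i)
  have : cross2 (dual0 q (i+1) - dual0 q i) (dual0 q j - dual0 q i)
      = det2 (dual0 q i) (dual0 q (i+1)) (dual0 q j) := rfl
  rw [this, hd1, dual0, dual0]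
  nlinarith [key, hγ i, hg2, hγ j, mul_pos (mul_pos (hγ i) hg2) (hγ j), mul_pos hpos1 hpos2]

/-- pairing of consecutive dual vertices -/
lemma dual_pairing (q : Fin n → ℝ × ℝ) (i : Fin n)
    (h1 : cross2 (q i) (q (i+1)) ≠ 0) (h2 : cross2 (q (i+1)) (q (i+2)) ≠ 0) :
    cross2 (dual0 q i) (dual0 q (i+1))
      = cross2 (q (i+1) - q i) (q (i+2) - q (i+1)) / (cross2 (q i) (q (i+1)) * cross2 (q (i+1)) (q (i+2))) := by
  rw [dual0, dual0, show (i+1)+1 = i+2 by ring]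
  simp only [cross2, rot, Prod.smul_fst, Prod.smul_snd, Prod.fst_sub, Prod.snd_sub, smul_eq_mul]
  field_simp
  ring


lemma bidual_core (x0 x1 x2 : ℝ × ℝ) (h1 : cross2 x0 x1 ≠ 0) (h2 : cross2 x1 x2 ≠ 0) :
    rot ((cross2 x1 x2)⁻¹ • rot (x2 - x1) - (cross2 x0 x1)⁻¹ • rot (x1 - x0))
      = ((cross2 x0 x1)⁻¹ * (cross2 x1 x2)⁻¹ * cross2 (x1 - x0) (x2 - x1)) • x1 := by
  have hk1 : cross2 x1 x2 * (x1.1 - x0.1) - cross2 x0 x1 * (x2.1 - x1.1)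
      = cross2 (x1 - x0) (x2 - x1) * x1.1 := by
    simp only [cross2, Prod.fst_sub, Prod.snd_sub]; ring
  have hk2 : cross2 x1 x2 * (x1.2 - x0.2) - cross2 x0 x1 * (x2.2 - x1.2)
      = cross2 (x1 - x0) (x2 - x1) * x1.2 := by
    simp only [cross2, Prod.fst_sub, Prod.snd_sub]; ring
  set g1 := cross2 x0 x1
  set g2 := cross2 x1 x2
  set X := cross2 (x1 - x0) (x2 - x1)
  have hg12 : g1 * g2 ≠ 0 := mul_ne_zero h1 h2
  apply Prod.ext
  · simp only [rot, Prod.smul_fst, Prod.smul_snd, Prod.fst_sub, Prod.snd_sub, smul_eq_mul]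
    apply mul_left_cancel₀ hg12
    calc g1 * g2 * -(g2⁻¹ * (x2.1 - x1.1) - g1⁻¹ * (x1.1 - x0.1))
        = g2 * (x1.1 - x0.1) - g1 * (x2.1 - x1.1) := by field_simp; ring
      _ = X * x1.1 := hk1
      _ = g1 * g2 * (g1⁻¹ * g2⁻¹ * X * x1.1) := by field_simp
  · simp only [rot, Prod.smul_fst, Prod.smul_snd, Prod.fst_sub, Prod.snd_sub, smul_eq_mul]
    apply mul_left_cancel₀ hg12
    calc g1 * g2 * (g2⁻¹ * -(x2.2 - x1.2) - g1⁻¹ * -(x1.2 - x0.2))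
        = g2 * (x1.2 - x0.2) - g1 * (x2.2 - x1.2) := by field_simp; ring
      _ = X * x1.2 := hk2
      _ = g1 * g2 * (g1⁻¹ * g2⁻¹ * X * x1.2) := by field_simp

/-- the bidual recovers the (shifted) polygon -/
lemma bidual (q : Fin n → ℝ × ℝ) (i : Fin n)
    (h1 : cross2 (q i) (q (i+1)) ≠ 0) (h2 : cross2 (q (i+1)) (q (i+2)) ≠ 0)
    (h3 : cross2 (dual0 q i) (dual0 q (i+1)) ≠ 0) :
    dual0 (dual0 q) i = q (i+1) := by
  have hd1 : dual0 q (i+1) = (cross2 (q (i+1)) (q (i+2)))⁻¹ • rot (q (i+2) - q (i+1)) := by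
    rw [dual0, show (i+1)+1 = i+2 by ring]
  have hdi : dual0 q i = (cross2 (q i) (q (i+1)))⁻¹ • rot (q (i+1) - q i) := rfl
  have hcr : cross2 (dual0 q i) (dual0 q (i+1))
      = (cross2 (q i) (q (i+1)))⁻¹ * (cross2 (q (i+1)) (q (i+2)))⁻¹
        * cross2 (q (i+1) - q i) (q (i+2) - q (i+1)) := by
    rw [hdi, hd1, cross2_smul_smul, cross2_rot]
  have hs : (cross2 (q i) (q (i+1)))⁻¹ * (cross2 (q (i+1)) (q (i+2)))⁻¹
      * cross2 (q (i+1) - q i) (q (i+2) - q (i+1)) ≠ 0 := by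
    rw [← hcr]; exact h3
  show (cross2 (dual0 q i) (dual0 q (i+1)))⁻¹ • rot (dual0 q (i+1) - dual0 q i) = q (i+1)
  rw [hcr, hd1, hdi, bidual_core (q i) (q (i+1)) (q (i+2)) h1 h2]
  exact inv_smul_smul₀ hs _

end Dual

section Chains

variable {n : ℕ} [NeZero n]

/-- side covectors of a lifted polygon -/
def sides (u : Fin n → Fin 3 → ℝ) : Fin n → Fin 3 → ℝ := fun i => cross3 (u i) (u (i+1))

lemma pentagramD_sides (u : Fin n → Fin 3 → ℝ) :
    pentagramD (sides u) = sides (pentagramS u) := by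
  funext i
  show cross3 (cross3 (sides u (i-1)) (sides u (i+1))) (cross3 (sides u i) (sides u (i+2)))
    = cross3 (pentagramS u i) (pentagramS u (i+1))
  have h1 : sides u (i-1) = cross3 (u (i-1)) (u i) := by
    rw [sides, show (i-1) + 1 = i by ring]
  have h2 : sides u (i+2) = cross3 (u (i+2)) (u (i+3)) := by
    rw [sides, show (i+2) + 1 = i + 3 by ring]
  have h1b : sides u (i+1) = cross3 (u (i+1)) (u (i+2)) := by
    rw [sides, show (i+1) + 1 = i + 2 by ring]
  have h0 : sides u i = cross3 (u i) (u (i+1)) := rfl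
  have h3 : pentagramS u i = cross3 (cross3 (u (i-1)) (u i)) (cross3 (u (i+1)) (u (i+2))) := rfl
  have h4 : pentagramS u (i+1)
      = cross3 (cross3 (u i) (u (i+1))) (cross3 (u (i+2)) (u (i+3))) := by
    rw [pentagramS, show (i+1) - 1 = i by ring, show (i+1) + 1 = i + 2 by ring,
      show (i+1) + 2 = i + 3 by ring]
  rw [h0, h1, h2, h1b, h3, h4]

lemma pentagramD_iter_sides (k : ℕ) (u : Fin n → Fin 3 → ℝ) :
    pentagramD^[k] (sides u) = sides (pentagramS^[k] u) := by
  induction k generalizing u with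
  | zero => simp
  | succ k ih =>
    rw [Function.iterate_succ_apply, pentagramD_sides, ih,
      Function.iterate_succ_apply]

/-- iterating the dual-chart pentagram map preserves convexity and lift structure -/
lemma chainD (hn : 5 ≤ n) (O : ℝ × ℝ) :
    ∀ (k : ℕ) (δ : Fin n → ℝ × ℝ) (l : Fin n → Fin 3 → ℝ) (ν : Fin n → ℝ),
    ConvexCCW δ → (∀ i, ν i ≠ 0) → (∀ i, l i = ν i • MO O (lift (δ i))) →
    ∃ (δ' : Fin n → ℝ × ℝ) (ν' : Fin n → ℝ), ConvexCCW δ' ∧ (∀ i, ν' i ≠ 0) ∧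
      (∀ i, pentagramD^[k] l i = ν' i • MO O (lift (δ' i))) := by
  intro k
  induction k with
  | zero => intro δ l ν h1 h2 h3; exact ⟨δ, ν, h1, h2, h3⟩
  | succ k ih =>
    intro δ l ν h1 h2 h3
    have hstep : ∀ i, pentagramD l i
        = ((ν (i-1) * ν (i+1) * (ν i * ν (i+2)))
          * cross2 (δ (i+1) - δ (i-1)) (δ (i+2) - δ i)) • MO O (lift (Dmap δ i)) := by
      intro i
      have hl : l = fun i => ν i • (fun j => MO O (lift (δ j))) i := by
        funext j; exact h3 j
      rw [hl, pentagramD_smul, pentagramD_MO]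
      have hDl := Dmap_lift hn h1 (fun j => lift (δ j)) (fun _ => 1) (fun j => (one_smul ℝ _).symm) i
      show (ν (i-1) * ν (i+1) * (ν i * ν (i+2)))
          • MO O (pentagramD (fun j => lift (δ j)) i) = _
      rw [hDl, MO_smul, smul_smul]
      congr 1
      ring
    have hν' : ∀ i, (ν (i-1) * ν (i+1) * (ν i * ν (i+2)))
        * cross2 (δ (i+1) - δ (i-1)) (δ (i+2) - δ i) ≠ 0 := by
      intro i
      have := Xi_pos hn h1 i
      have := h2 (i-1); have := h2 (i+1); have := h2 i; have := h2 (i+2)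
      positivity
    have := ih (Dmap δ) (pentagramD l) _ (Dmap_convex hn h1) hν' hstep
    obtain ⟨δ', ν', c1, c2, c3⟩ := this
    exact ⟨δ', ν', c1, c2, fun i => by
      rw [Function.iterate_succ_apply]; exact c3 i⟩

/-- iterating the primal-chart pentagram map: convexity, lifts, and inclusion transfer -/
lemma chainP (hn : 5 ≤ n) :
    ∀ (m : ℕ) (q : Fin n → ℝ × ℝ) (l : Fin n → Fin 3 → ℝ) (ν : Fin n → ℝ),
    ConvexCCW q → (∀ i, ν i ≠ 0) → (∀ i, l i = ν i • lift (q i)) →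
    ∃ (q' : Fin n → ℝ × ℝ) (ν' : Fin n → ℝ), ConvexCCW q' ∧ (∀ i, ν' i ≠ 0) ∧
      (∀ i, pentagramD^[m] l i = ν' i • lift (q' i)) ∧
      (∀ z : ℝ × ℝ, (∀ i, 0 < sid q' i z) → (∀ i, 0 < sid q i z)) := by
  intro m
  induction m with
  | zero => intro q l ν h1 h2 h3; exact ⟨q, ν, h1, h2, h3, fun z h => h⟩
  | succ m ih =>
    intro q l ν h1 h2 h3
    have hstep : ∀ i, pentagramD l i
        = ((ν (i-1) * ν (i+1) * (ν i * ν (i+2)))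
          * cross2 (q (i+1) - q (i-1)) (q (i+2) - q i)) • lift (Dmap q i) := by
      intro i
      have hl : l = fun i => ν i • (fun j => lift (q j)) i := by
        funext j; exact h3 j
      rw [hl, pentagramD_smul]
      have hDl := Dmap_lift hn h1 (fun j => lift (q j)) (fun _ => 1) (fun j => (one_smul ℝ _).symm) i
      show (ν (i-1) * ν (i+1) * (ν i * ν (i+2)))
          • pentagramD (fun j => lift (q j)) i = _
      rw [hDl, smul_smul]
      congr 1
      ring
    have hν' : ∀ i, (ν (i-1) * ν (i+1) * (ν i * ν (i+2)))
        * cross2 (q (i+1) - q (i-1)) (q (i+2) - q i) ≠ 0 := by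
      intro i
      have := Xi_pos hn h1 i
      have := h2 (i-1); have := h2 (i+1); have := h2 i; have := h2 (i+2)
      positivity
    obtain ⟨q', ν', c1, c2, c3, c4⟩ := ih (Dmap q) (pentagramD l) _ (Dmap_convex hn h1) hν' hstep
    refine ⟨q', ν', c1, c2, fun i => by rw [Function.iterate_succ_apply]; exact c3 i, ?_⟩
    intro z hz i
    have hz' : ∀ j, 0 < sid (Dmap q) j z := c4 z hz
    -- z is in the hull of the Dmap polygon, whose vertices are strictly inside q
    have hzin : z ∈ convexHull ℝ (Set.range (Dmap q)) :=
      inReg_subset_hull hn (Dmap_convex hn h1) hz'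
    have hsub : convexHull ℝ (Set.range (Dmap q)) ⊆ {y | 0 < sid q i y} :=
      convexHull_min (by rintro _ ⟨j, rfl⟩; exact Dmap_inside hn h1 j i) (convex_sid_gt i)
    exact hsub hzin

/-- iterated pentagram map of a scaled shifted polygon -/
lemma pentagramD_iter_smul_shift :
    ∀ (k : ℕ) (s : Fin n → ℝ) (z : Fin n → Fin 3 → ℝ) (c : Fin n) (i : Fin n),
    ∃ t : ℝ, pentagramD^[k] (fun i => s i • z (i + c)) i = t • (pentagramD^[k] z) (i + c) := by
  intro k
  induction k with
  | zero => intro s z c i; exact ⟨s i, rfl⟩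
  | succ k ih =>
    intro s z c i
    have hD : pentagramD (fun i => s i • z (i + c))
        = fun i => (s (i-1) * s (i+1) * (s i * s (i+2))) • (pentagramD z) (i + c) := by
      rw [pentagramD_smul]
      have : pentagramD (fun i => z (i + c)) = fun i => pentagramD z (i + c) :=
        pentagramD_shift c z
      rw [this]
    obtain ⟨t, ht⟩ := ih (fun i => s (i-1) * s (i+1) * (s i * s (i+2))) (pentagramD z) c i
    refine ⟨t, ?_⟩
    rw [Function.iterate_succ_apply, hD, ht, ← Function.iterate_succ_apply]

/-- D^k ∘ S^k is a projective shift by k -/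
lemma DSk (x : Fin n → Fin 3 → ℝ) :
    ∀ (k : ℕ) (i : Fin n), ∃ s : ℝ,
      pentagramD^[k] (pentagramS^[k] x) i = s • x (i + ((k : ℕ) : Fin n)) := by
  intro k
  induction k with
  | zero => intro i; exact ⟨1, by simp⟩
  | succ k ih =>
    intro i
    set y := pentagramS^[k] x with hy
    choose σ hσ using DS_shift y
    have h1 : pentagramS^[k+1] x = pentagramS y := Function.iterate_succ_apply' _ _ _
    have h2 : pentagramD^[k+1] (pentagramS y) = pentagramD^[k] (pentagramD (pentagramS y)) :=
      Function.iterate_succ_apply _ _ _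
    have h3 : pentagramD (pentagramS y) = fun j => σ j • y (j + 1) := by
      funext j; exact hσ j
    obtain ⟨t, ht⟩ := pentagramD_iter_smul_shift k σ y 1 i
    obtain ⟨s', hs'⟩ := ih (i + 1)
    refine ⟨t * s', ?_⟩
    have hidx : i + 1 + ((k : ℕ) : Fin n) = i + (((k + 1 : ℕ)) : Fin n) := by
      push_cast; ring
    rw [h1, h2, h3, ht, hs', smul_smul, hidx]

lemma pentagramD_iter_const_smul :
    ∀ (k : ℕ) (a : ℝ) (f : Fin n → Fin 3 → ℝ), ∃ c : ℝ,
      ∀ i, pentagramD^[k] (fun i => a • f i) i = c • pentagramD^[k] f i := by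
  intro k
  induction k with
  | zero => exact fun a f => ⟨a, fun i => rfl⟩
  | succ k ih =>
    intro a f
    obtain ⟨c, hc⟩ := ih (a * a * (a * a)) (pentagramD f)
    refine ⟨c, fun i => ?_⟩
    have h1 : pentagramD (fun i => a • f i) = fun i => (a * a * (a * a)) • pentagramD f i :=
      pentagramD_smul (fun _ => a) f
    calc pentagramD^[k+1] (fun i => a • f i) i
        = pentagramD^[k] (pentagramD (fun i => a • f i)) i := by
          rw [Function.iterate_succ_apply]
      _ = pentagramD^[k] (fun i => (a * a * (a * a)) • pentagramD f i) i := by rw [h1]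
      _ = c • pentagramD^[k] (pentagramD f) i := hc i
      _ = c • pentagramD^[k+1] f i := by rw [← Function.iterate_succ_apply]

/-- reflection conjugation for the iterated map -/
lemma pentagramD_iter_T3 :
    ∀ (k : ℕ) (l : Fin n → Fin 3 → ℝ), ∃ c : ℝ,
      ∀ i, pentagramD^[k] (fun i => T3 (l i)) i = c • T3 (pentagramD^[k] l i) := by
  intro k
  induction k with
  | zero => exact fun l => ⟨1, fun i => by simp⟩
  | succ k ih =>
    intro l
    obtain ⟨c2, hc2⟩ := ih (pentagramD l)
    obtain ⟨c1, hc1⟩ := pentagramD_iter_const_smul k (-1) (fun i => T3 (pentagramD l i))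
    refine ⟨c1 * c2, fun i => ?_⟩
    calc pentagramD^[k+1] (fun i => T3 (l i)) i
        = pentagramD^[k] (pentagramD (fun i => T3 (l i))) i := by
          rw [Function.iterate_succ_apply]
      _ = pentagramD^[k] (fun i => (-1 : ℝ) • T3 (pentagramD l i)) i := by
          rw [pentagramD_T3]
      _ = c1 • pentagramD^[k] (fun i => T3 (pentagramD l i)) i := hc1 i
      _ = c1 • (c2 • T3 (pentagramD^[k] (pentagramD l) i)) := by rw [hc2 i]
      _ = (c1 * c2) • T3 (pentagramD^[k+1] l i) := by
          rw [smul_smul, ← Function.iterate_succ_apply]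

lemma convexCCW_shift {q : Fin n → ℝ × ℝ} (c : Fin n) (hq : ConvexCCW q) :
    ConvexCCW (fun i => q (i + c)) := by
  intro i j hj1 hj2
  have h := hq (i + c) (j + c) (by
      intro h; exact hj1 (by
        have := congrArg (fun z => z - c) h
        simpa using this))
    (by
      intro h
      apply hj2
      have h' : j + c = (i + 1) + c := by rw [h]; ring
      have := congrArg (fun z => z - c) h'
      simpa using this)
  have e : (i + c) + 1 = (i + 1) + c := by ring
  rw [e] at h
  exact h

lemma convexCCW_translate {q : Fin n → ℝ × ℝ} (z : ℝ × ℝ) (hq : ConvexCCW q) :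
    ConvexCCW (fun i => q i - z) := by
  intro i j hj1 hj2
  have h := hq i j hj1 hj2
  have e : ∀ a b : ℝ × ℝ, (a - z) - (b - z) = a - b := by intro a b; ring
  simpa only [e] using h

lemma convexCCW_untranslate {q : Fin n → ℝ × ℝ} (z : ℝ × ℝ)
    (hq : ConvexCCW (fun i => q i - z)) : ConvexCCW q := by
  intro i j hj1 hj2
  have h := hq i j hj1 hj2
  simp only at h
  have e : ∀ a b : ℝ × ℝ, (a - z) - (b - z) = a - b := by intro a b; ring
  rwa [e, e] at h

/-- a polygon cannot be CCW-convex in both orientations -/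
lemma not_both_orientations (hn : 5 ≤ n) {x : Fin n → ℝ × ℝ}
    (h1 : ConvexCCW x) (h2 : ConvexCCW (fun i => T2 (x i))) : False := by
  have ha := h1 0 ((2:ℕ) : Fin n) (natCast_ne_zero (by norm_num) (by omega))
    (by
      have : (0 : Fin n) + 1 = ((1:ℕ) : Fin n) := by push_cast; ring
      rw [this]
      intro hc
      rw [Fin.ext_iff, Fin.val_natCast, Fin.val_natCast] at hc
      rw [Nat.mod_eq_of_lt (by omega), Nat.mod_eq_of_lt (by omega)] at hc
      omega)
  have hb := h2 0 ((2:ℕ) : Fin n) (natCast_ne_zero (by norm_num) (by omega))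
    (by
      have : (0 : Fin n) + 1 = ((1:ℕ) : Fin n) := by push_cast; ring
      rw [this]
      intro hc
      rw [Fin.ext_iff, Fin.val_natCast, Fin.val_natCast] at hc
      rw [Nat.mod_eq_of_lt (by omega), Nat.mod_eq_of_lt (by omega)] at hc
      omega)
  simp only [T2, cross2, Prod.fst_sub, Prod.snd_sub] at ha hb
  nlinarith [ha, hb]

end Chains

section FinalHelpers

variable {n : ℕ} [NeZero n]

lemma lift_of_dehom (a : Fin 3 → ℝ) (h : a 2 ≠ 0) : a = a 2 • lift (dehom a) := by
  funext j
  fin_cases j <;> simp [lift, dehom, Pi.smul_apply, smul_eq_mul] <;> field_simp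

lemma lift_two (X : ℝ × ℝ) : lift X 2 = 1 := rfl
lemma lift_zero (X : ℝ × ℝ) : lift X 0 = X.1 := rfl
lemma lift_one (X : ℝ × ℝ) : lift X 1 = X.2 := rfl

lemma scaled_lift_eq {a b : ℝ} {X Y : ℝ × ℝ} (h : a • lift X = b • lift Y) (ha : a ≠ 0) :
    a = b ∧ X = Y := by
  have h2 := congrFun h 2
  have h0 := congrFun h 0
  have h1 := congrFun h 1
  simp only [Pi.smul_apply, lift_two, lift_zero, lift_one, smul_eq_mul, mul_one] at h2 h0 h1
  subst h2
  refine ⟨rfl, ?_⟩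
  have hX1 : X.1 = Y.1 := by
    exact mul_left_cancel₀ ha h0
  have hX2 : X.2 = Y.2 := by
    exact mul_left_cancel₀ ha h1
  exact Prod.ext hX1 hX2

lemma cross2OA (A B O : ℝ × ℝ) : cross2 (B - A) (O - A) = cross2 (A - O) (B - O) := by
  simp only [cross2, Prod.fst_sub, Prod.snd_sub]; ring

lemma det2_cross (a b c : ℝ × ℝ) : det2 a b c = cross2 (b - a) (c - b) := by
  simp only [det2_def, cross2, Prod.fst_sub, Prod.snd_sub]; ring

lemma dehomDual_cross_lift (O A B : ℝ × ℝ) (h : cross2 (B - A) (O - A) ≠ 0) :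
    dehomDual O (cross3 (lift A) (lift B)) = (cross2 (A - O) (B - O))⁻¹ • rot (B - A) := by
  have hp : pairO O (cross3 (lift A) (lift B)) = cross2 (B - A) (O - A) := pairO_cross_lift O A B
  have h0 : cross3 (lift A) (lift B) 0 = A.2 - B.2 := by
    simp [cross3, lift]
  have h1 : cross3 (lift A) (lift B) 1 = B.1 - A.1 := by
    simp [cross3, lift]
  have e1 : (dehomDual O (cross3 (lift A) (lift B))).1
      = ((cross2 (A - O) (B - O))⁻¹ • rot (B - A)).1 := by
    simp only [dehomDual, hp, h0, Prod.smul_fst, rot, Prod.snd_sub, smul_eq_mul]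
    rw [← cross2OA A B O]
    field_simp
    ring
  have e2 : (dehomDual O (cross3 (lift A) (lift B))).2
      = ((cross2 (A - O) (B - O))⁻¹ • rot (B - A)).2 := by
    simp only [dehomDual, hp, h1, Prod.smul_snd, rot, Prod.fst_sub, smul_eq_mul]
    rw [← cross2OA A B O]
    field_simp
  exact Prod.ext e1 e2

lemma sid_shift (x : Fin n → ℝ × ℝ) (c i : Fin n) (z : ℝ × ℝ) :
    sid (fun j => x (j + c)) i z = sid x (i + c) z := by
  simp only [sid]
  rw [show (i + 1) + c = (i + c) + 1 by ring]

lemma sid_center (q : Fin n → ℝ × ℝ) (i : Fin n) (O : ℝ × ℝ) :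
    sid q i O = cross2 (q i - O) (q (i+1) - O) := by
  rw [sid, cross2OA]

end FinalHelpers

end PP

open PP
open scoped Fin.CommRing

theorem iterated_inverse_pentagram_convex_iff_dual_contains_infinity
    {n : ℕ} [NeZero n] (hn : 5 ≤ n)
    (p : Fin n → ℝ × ℝ) (O : ℝ × ℝ)
    (hconv : ConvexCCW p)
    (hO : ∀ i, 0 < cross2 (p (i + 1) - p i) (O - p i))
    (v : Fin n → Fin 3 → ℝ) (hv : ∀ i, v i = ![(p i).1, (p i).2, 1])
    (w : Fin n → Fin 3 → ℝ) (hw : ∀ i, w i = cross3 (v i) (v (i + 1)))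
    (k : ℕ) (hk : 0 < k)
    -- `S^k(P)` is a genuine polygon of the affine plane
    (hgenS : ∀ i, (pentagramS^[k] v) i 2 ≠ 0)
    -- `D^k(P*)` lies in the affine chart of the dual plane determined by `O`
    (hgenD : ∀ i, pairO O ((pentagramD^[k] w) i) ≠ 0) :
    IsConvexPolygon (fun i => dehom ((pentagramS^[k] v) i))
      ↔ (0, 0) ∈ interior (convexHull ℝ
          (Set.range (fun i => dehomDual O ((pentagramD^[k] w) i)))) := by
  classical
  set u : Fin n → Fin 3 → ℝ := pentagramS^[k] v with hu
  set q : Fin n → ℝ × ℝ := fun i => dehom (u i) with hqdef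
  set t : Fin n → ℝ := fun i => u i 2 with ht
  have htne : ∀ i, t i ≠ 0 := hgenS
  have hulift : ∀ i, u i = t i • lift (q i) := fun i => lift_of_dehom (u i) (hgenS i)
  have hveq : ∀ i, v i = lift (p i) := fun i => hv i
  have hwsides : w = sides v := funext fun i => hw i
  have hDkw : pentagramD^[k] w = sides u := by
    rw [hwsides, pentagramD_iter_sides, hu]
  set r : Fin n → ℝ × ℝ := fun i => q i - O with hr
  have hside : ∀ i, sides u i
      = (t i * t (i+1)) • cross3 (lift (q i)) (lift (q (i+1))) := by
    intro i
    rw [sides, hulift i, hulift (i+1), cross3_smul]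
  have hpairs : ∀ i, pairO O (sides u i)
      = (t i * t (i+1)) * cross2 (q (i+1) - q i) (O - q i) := by
    intro i
    rw [hside i, pairO_smul, pairO_cross_lift]
  have hcne : ∀ i, cross2 (q (i+1) - q i) (O - q i) ≠ 0 := by
    intro i
    have hD := hgenD i
    rw [hDkw, hpairs i] at hD
    intro hc
    rw [hc, mul_zero] at hD
    exact hD rfl
  have hγne : ∀ i, cross2 (r i) (r (i+1)) ≠ 0 := by
    intro i
    have := hcne i
    rwa [cross2OA] at this
  have hreq : ∀ i, q (i+1) - q i = r (i+1) - r i := by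
    intro i; simp only [hr]; ring
  -- identification of the dual points
  have hdd : ∀ i, dehomDual O (pentagramD^[k] w i) = dual0 r i := by
    intro i
    have h1 : pentagramD^[k] w i = sides u i := by rw [hDkw]
    rw [h1, hside i, dehomDual_smul O (mul_ne_zero (htne i) (htne (i+1))),
      dehomDual_cross_lift O (q i) (q (i+1)) (hcne i)]
    show _ = (cross2 (r i) (r (i+1)))⁻¹ • rot (r (i+1) - r i)
    rw [← hreq i]
  -- chain I: convexity of the iterated dual polygon
  have hrp : ConvexCCW (fun i => p i - O) := convexCCW_translate O hconv
  have hγ0 : ∀ i : Fin n, 0 < cross2 ((fun i => p i - O) i) ((fun i => p i - O) (i+1)) := by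
    intro i
    have := hO i
    rwa [cross2OA] at this
  have hδ0conv : ConvexCCW (dual0 (fun i => p i - O)) := dual_convex hn hrp hγ0
  have hwpair : ∀ i, pairO O (w i) = cross2 (p (i+1) - p i) (O - p i) := by
    intro i
    rw [hw i, hveq i, hveq (i+1), pairO_cross_lift]
  have hwlift : ∀ i, w i = (pairO O (w i)) • MO O (lift (dual0 (fun i => p i - O) i)) := by
    intro i
    have hne : pairO O (w i) ≠ 0 := by rw [hwpair i]; exact ne_of_gt (hO i)
    have h2 : dehomDual O (w i) = dual0 (fun i => p i - O) i := by
      rw [hw i, hveq i, hveq (i+1),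
        dehomDual_cross_lift O (p i) (p (i+1)) (ne_of_gt (hO i))]
      show _ = (cross2 (p i - O) (p (i+1) - O))⁻¹ • rot ((p (i+1) - O) - (p i - O))
      rw [show (p (i+1) - O) - (p i - O) = p (i+1) - p i from by ring]
    have h1 := covector_lift O (w i) hne
    rw [h2] at h1
    exact h1
  obtain ⟨δk, νk, hδkconv, hνkne, hδklift⟩ := chainD hn O k (dual0 (fun i => p i - O)) w
    (fun i => pairO O (w i)) hδ0conv
    (fun i => by show pairO O (w i) ≠ 0; rw [hwpair i]; exact ne_of_gt (hO i)) hwlift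
  have hδkeq : δk = dual0 r := by
    funext i
    have h1 : dehomDual O (pentagramD^[k] w i) = δk i := by
      rw [hδklift i]
      exact dehomDual_MO_lift O (hνkne i) _
    rw [← h1, hdd i]
  have hδconv : ConvexCCW (dual0 r) := hδkeq ▸ hδkconv
  -- rewrite the RHS
  have hrange : (fun i => dehomDual O (pentagramD^[k] w i)) = dual0 r := funext hdd
  rw [hrange]
  have hzz : ((0:ℝ), (0:ℝ)) = ((0,0) : ℝ × ℝ) := rfl
  have hRHS : ((0,0) : ℝ × ℝ) ∈ interior (convexHull ℝ (Set.range (dual0 r)))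
      ↔ ∀ i, 0 < cross2 (dual0 r i) (dual0 r (i+1)) := by
    constructor
    · intro h i
      have := inReg_of_mem_interior hn hδconv h i
      rwa [← hzz, sid_zero] at this
    · intro h
      apply mem_interior_of_inReg hn hδconv
      intro i
      rw [← hzz, sid_zero]
      exact h i
  rw [hRHS]
  constructor
  · -- forward: convex ⟹ pairings positive
    intro hLHS
    have hccw : ConvexCCW q := by
      rcases hLHS with hccw | hcw
      · exact hccw
      exfalso
      -- CW case is impossible
      have hcw' : ConvexCCW (fun i => T2 (q i)) := hcw
      have hTlift : ∀ i, T3 (u i) = t i • lift (T2 (q i)) := by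
        intro i
        rw [hulift i, T3_smul, T3_lift]
      obtain ⟨q'', ν'', hq''conv, hν''ne, hq''lift, _⟩ :=
        chainP hn k (fun i => T2 (q i)) (fun i => T3 (u i)) t hcw' htne hTlift
      obtain ⟨c, hc⟩ := pentagramD_iter_T3 k u
      have hq''eq : ∀ i, q'' i = T2 (p (i + ((k:ℕ) : Fin n))) := by
        intro i
        obtain ⟨s, hs⟩ := DSk v k i
        rw [← hu] at hs
        have h1 : pentagramD^[k] (fun i => T3 (u i)) i = (c * s) • lift (T2 (p (i + ((k:ℕ) : Fin n)))) := by
          rw [hc i, hs, T3_smul, smul_smul]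
          congr 1
          rw [hveq, T3_lift]
        rw [hq''lift i] at h1
        exact (scaled_lift_eq h1 (hν''ne i)).2
      have hcontra : ConvexCCW (fun i => T2 (p (i + ((k:ℕ) : Fin n)))) := by
        have : q'' = fun i => T2 (p (i + ((k:ℕ) : Fin n))) := funext hq''eq
        rwa [this] at hq''conv
      exact not_both_orientations hn (convexCCW_shift ((k:ℕ) : Fin n) hconv) hcontra
    -- now run the primal chain to show O is strictly inside q
    obtain ⟨q'', ν'', hq''conv, hν''ne, hq''lift, htrans⟩ :=
      chainP hn k q u t hccw htne hulift
    have hq''eq : ∀ i, q'' i = p (i + ((k:ℕ) : Fin n)) := by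
      intro i
      obtain ⟨s, hs⟩ := DSk v k i
      rw [← hu] at hs
      rw [hveq] at hs
      rw [hq''lift i] at hs
      exact ((scaled_lift_eq hs (hν''ne i)).2).symm |>.symm ▸ (scaled_lift_eq hs (hν''ne i)).2
    have hOin : ∀ i, 0 < sid q i O := by
      apply htrans O
      intro i
      have : sid q'' i O = sid (fun j => p (j + ((k:ℕ) : Fin n))) i O := by
        congr 1
        funext j
        exact hq''eq j
      rw [this, sid_shift]
      exact hO (i + ((k:ℕ) : Fin n))
    intro i
    have hγpos : ∀ j, 0 < cross2 (r j) (r (j+1)) := by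
      intro j
      have := hOin j
      rwa [sid_center] at this
    have hpd := dual_pairing r i (hγne i) (by
      have := hγne (i+1)
      rwa [show (i+1) + 1 = i + 2 by ring] at this)
    rw [hpd]
    apply div_pos
    · -- numerator: local convexity of q
      have h1 : 0 < det2 (q i) (q (i+1)) (q (i+2)) := det2_consec' hn hccw i
      rw [det2_cross] at h1
      have e : r (i+1) - r i = q (i+1) - q i := (hreq i).symm
      have e2 : r (i+2) - r (i+1) = q (i+2) - q (i+1) := by simp only [hr]; ring
      rw [e, e2]
      exact h1
    · exact mul_pos (hγpos i) (by
        have := hγpos (i+1)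
        rwa [show (i+1) + 1 = i + 2 by ring] at this)
  · -- backward: pairings positive ⟹ convex
    intro hpair
    left
    show ConvexCCW q
    have hdualconv : ConvexCCW (dual0 (dual0 r)) :=
      dual_convex hn hδconv (fun i => hpair i)
    have hbid : ∀ i, dual0 (dual0 r) i = r (i+1) := by
      intro i
      exact bidual r i (hγne i) (by
          have := hγne (i+1)
          rwa [show (i+1) + 1 = i + 2 by ring] at this)
        (ne_of_gt (hpair i))
    have hshifted : ConvexCCW (fun i => r (i+1)) := by
      have : dual0 (dual0 r) = fun i => r (i+1) := funext hbid
      rwa [this] at hdualconv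
    have hrconv : ConvexCCW r := by
      have h1 := convexCCW_shift (-1 : Fin n) hshifted
      have : (fun i => (fun j => r (j+1)) (i + (-1 : Fin n))) = r := by
        funext i
        simp only []
        congr 1
        ring
      rwa [this] at h1
    exact convexCCW_untranslate O hrconv
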